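/- Equality of the two terminating-3F2 representations (16) and (17) of A_k^{(3)}: [(b3+b2-a4-a3)_k (b1-a3)_k / k!] · 3F2(b3-a4, b2-a4, -k; b3+b2-a4-a3, 1+a3-b1-k; 1) = [(b1+b3-a3-a4)_k (b2+b3-a3-a4)_k / k!] · 3F2(b3-a3, b3-a4, -k; b1+b3-a3-a4, b2+b3-a3-a4; 1) for all natural k and generic complex parameters. -/

import Mathlib

open Finset

noncomputable def PP (n : ℕ) (x : ℂ) : ℂ := (ascPochhammer ℂ n).eval x

lemma PP_def (n : ℕ) (x : ℂ) : (ascPochhammer ℂ n).eval x = PP n x := rfl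


lemma PP_zero (x : ℂ) : PP 0 x = 1 := by simp [PP]

lemma PP_succ (n : ℕ) (x : ℂ) : PP (n+1) x = PP n x * (x + n) :=
  ascPochhammer_succ_eval n x

lemma PP_add (m n : ℕ) (x : ℂ) : PP (m+n) x = PP m x * PP n (x + m) := by
  have h := congrArg (Polynomial.eval x) (ascPochhammer_mul ℂ m n)
  simpa [PP, Polynomial.eval_comp] using h.symm

lemma PP_neg (n : ℕ) (x : ℂ) : PP n (-x) = (-1)^n * PP n (x - n + 1) := by
  rw [PP, ascPochhammer_eval_neg_eq_descPochhammer, descPochhammer_eval_eq_ascPochhammer, PP]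

lemma PP_one_eq (n : ℕ) : PP n 1 = (n.factorial : ℂ) := ascPochhammer_eval_one ℂ n

lemma PP_vandermonde (n : ℕ) (a b : ℂ) :
    PP n (a + b) = ∑ i ∈ range (n+1), (n.choose i : ℂ) * PP i a * PP (n-i) b := by
  induction n with
  | zero => simp [PP]
  | succ n ih =>
    rw [PP_succ, ih, Finset.sum_mul]
    have key : ∀ i ∈ range (n+1), (n.choose i : ℂ) * PP i a * PP (n-i) b * (a + b + n)
        = (n.choose i : ℂ) * (PP (i+1) a * PP (n-i) b)
          + (n.choose i : ℂ) * (PP i a * PP ((n-i)+1) b) := by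
      intro i hi
      rw [mem_range] at hi
      have hi' : i ≤ n := Nat.lt_succ_iff.mp hi
      have hc : ((n - i : ℕ) : ℂ) = (n : ℂ) - i := by
        push_cast [Nat.cast_sub hi']; ring
      rw [PP_succ, PP_succ, hc]
      ring
    rw [Finset.sum_congr rfl key, Finset.sum_add_distrib]
    -- massage the two sums
    have hS2 : ∑ i ∈ range (n+1), (n.choose i : ℂ) * (PP i a * PP ((n-i)+1) b)
        = (∑ i ∈ range (n+1), (n.choose (i+1) : ℂ) * (PP (i+1) a * PP (n-i) b)) + PP (n+1) b := by
      rw [Finset.sum_range_succ']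
      have h0 : (n.choose 0 : ℂ) * (PP 0 a * PP ((n-0)+1) b) = PP (n+1) b := by
        simp [PP_zero]
      rw [h0]
      congr 1
      · rw [Finset.sum_range_succ]
        have hlast : (n.choose (n+1) : ℂ) * (PP (n+1) a * PP (n-n) b) = 0 := by
          simp [Nat.choose_succ_self]
        rw [hlast, add_zero]
        apply Finset.sum_congr rfl
        intro i hi
        rw [mem_range] at hi
        have : n - (i+1) + 1 = n - i := by omega
        rw [this]
    rw [hS2, ← add_assoc, ← Finset.sum_add_distrib]
    have hcomb : ∑ i ∈ range (n+1),
        ((n.choose i : ℂ) * (PP (i+1) a * PP (n-i) b)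
          + (n.choose (i+1) : ℂ) * (PP (i+1) a * PP (n-i) b))
        = ∑ i ∈ range (n+1), ((n+1).choose (i+1) : ℂ) * (PP (i+1) a * PP ((n+1)-(i+1)) b) := by
      apply Finset.sum_congr rfl
      intro i _
      have : ((n+1).choose (i+1) : ℂ) = (n.choose i : ℂ) + (n.choose (i+1) : ℂ) := by
        rw [Nat.choose_succ_succ]; push_cast; ring
      rw [this]
      have h2 : (n+1) - (i+1) = n - i := by omega
      rw [h2]; ring
    rw [hcomb, Finset.sum_range_succ' (fun i => ((n+1).choose i : ℂ) * PP i a * PP ((n+1)-i) b) (n+1)]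
    simp only [mul_assoc]
    simp [PP_zero]

lemma PP_vandermonde' (n : ℕ) (a b : ℂ) :
    ∑ j ∈ range (n+1), (-1)^j * (n.choose j : ℂ) * PP j b * PP (n-j) (a + j) = PP n (a - b) := by
  have hrefl : PP n (a - b) = (-1)^n * PP n (b + (1 - a - n)) := by
    have h := PP_neg n (b - a)
    rw [show -(b - a) = a - b by ring] at h
    rw [show b - a - (n:ℂ) + 1 = b + (1 - a - n) by ring] at h
    exact h
  rw [hrefl, PP_vandermonde, Finset.mul_sum]
  refine Finset.sum_congr rfl ?_
  intro i hi
  rw [mem_range] at hi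
  have hi' : i ≤ n := Nat.lt_succ_iff.mp hi
  have hci : ((n-i : ℕ):ℂ) = (n:ℂ) - i := by push_cast [Nat.cast_sub hi']; ring
  have hm : PP (n-i) (1 - a - n) = (-1)^(n-i) * PP (n-i) (a + i) := by
    have h := PP_neg (n-i) (a + n - 1)
    rw [show -(a + (n:ℂ) - 1) = 1 - a - n by ring] at h
    rw [show a + (n:ℂ) - 1 - ((n-i : ℕ):ℂ) + 1 = a + ((n:ℂ) - ((n-i:ℕ):ℂ)) by ring, hci] at h
    rw [show (n:ℂ) - ((n:ℂ) - i) = (i:ℂ) by ring] at h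
    exact h
  have hs : (-1:ℂ)^n * (-1)^(n-i) = (-1)^i := by
    rw [← pow_add, show n + (n-i) = 2*(n-i) + i by omega, pow_add, pow_mul]
    norm_num
  rw [hm, ← hs]
  ring

lemma PP_negk (k j : ℕ) (hj : j ≤ k) :
    PP j (-(k:ℂ)) = (-1)^j * (k.factorial : ℂ) / ((k-j).factorial : ℂ) := by
  have h := PP_neg j (k:ℂ)
  have hc : ((k:ℂ) - j + 1) = (((k-j)+1 : ℕ) : ℂ) := by push_cast [Nat.cast_sub hj]; ring
  rw [hc] at h
  have hmul := PP_add (k-j) j (1:ℂ)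
  rw [Nat.sub_add_cancel hj] at hmul
  simp only [PP_one_eq] at hmul
  have h2 : PP j ((((k-j):ℕ):ℂ) + 1) = (k.factorial : ℂ) / ((k-j).factorial : ℂ) := by
    rw [eq_div_iff (by exact_mod_cast (Nat.factorial_ne_zero (k-j)))]
    rw [show (((k-j):ℕ):ℂ) + 1 = 1 + ((k-j):ℕ) by ring, mul_comm]
    exact hmul.symm
  rw [show ((((k-j)+1 : ℕ)) : ℂ) = (((k-j):ℕ):ℂ) + 1 by push_cast; ring, h2] at h
  rw [h]; ring

lemma tri_swap (k : ℕ) (F : ℕ → ℕ → ℂ) :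
    ∑ j ∈ range (k+1), ∑ i ∈ range (k+1-j), F j i
    = ∑ m ∈ range (k+1), ∑ j ∈ range (m+1), F j (m-j) := by
  have h1 : ∀ j ∈ range (k+1), ∑ i ∈ range (k+1-j), F j i = ∑ m ∈ Ico j (k+1), F j (m-j) := by
    intro j _
    rw [Finset.sum_Ico_eq_sum_range]
    refine Finset.sum_congr rfl ?_
    intro i _
    congr 1
    omega
  rw [Finset.sum_congr rfl h1]
  simpa [Nat.Ico_zero_eq_range] using Finset.sum_Ico_Ico_comm 0 (k+1) (fun j m => F j (m-j))

lemma choose_cast_eq (k m j : ℕ) (hm : m ≤ k) (hj : j ≤ m) :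
    (k.choose j : ℂ) * ((k-j).choose (m-j) : ℂ) = (k.choose m : ℂ) * (m.choose j : ℂ) := by
  have := Nat.choose_mul (n := k) hj
  exact_mod_cast this.symm

lemma coreL (k : ℕ) (x y z w : ℂ) :
    ∑ j ∈ range (k+1), (k.choose j : ℂ) * PP (k-j) (y+z+j) * PP (k-j) w * PP j x * PP j y
    = ∑ m ∈ range (k+1), (k.choose m : ℂ) * PP m y * PP (k-m) z * PP (k-m) w
        * PP m (x+(w+((k-m:ℕ):ℂ))) := by
  have stepA : ∀ j ∈ range (k+1),
      (k.choose j : ℂ) * PP (k-j) (y+z+j) * PP (k-j) w * PP j x * PP j y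
      = ∑ i ∈ range (k+1-j), (k.choose j : ℂ) * (((k-j).choose i : ℂ))
          * PP (j+i) y * PP ((k-j)-i) z * PP (k-j) w * PP j x := by
    intro j hj
    rw [mem_range] at hj
    have hj' : j ≤ k := Nat.lt_succ_iff.mp hj
    rw [show y+z+(j:ℂ) = (y+(j:ℂ)) + z by ring, PP_vandermonde]
    rw [show k+1-j = (k-j)+1 by omega]
    simp only [Finset.mul_sum, Finset.sum_mul]
    refine Finset.sum_congr rfl ?_
    intro i _
    rw [PP_add j i y]
    ring
  rw [Finset.sum_congr rfl stepA,
    tri_swap k (fun j i => (k.choose j : ℂ) * (((k-j).choose i : ℂ))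
      * PP (j+i) y * PP ((k-j)-i) z * PP (k-j) w * PP j x)]
  refine Finset.sum_congr rfl ?_
  intro m hm
  rw [mem_range] at hm
  have hm' : m ≤ k := Nat.lt_succ_iff.mp hm
  have inner : ∀ j ∈ range (m+1),
      (k.choose j : ℂ) * (((k-j).choose (m-j) : ℂ))
        * PP (j+(m-j)) y * PP ((k-j)-(m-j)) z * PP (k-j) w * PP j x
      = (k.choose m : ℂ) * PP m y * PP (k-m) z * PP (k-m) w
        * ((m.choose j : ℂ) * PP j x * PP (m-j) (w+((k-m:ℕ):ℂ))) := by
    intro j hjm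
    rw [mem_range] at hjm
    have hjm' : j ≤ m := Nat.lt_succ_iff.mp hjm
    rw [show j+(m-j) = m by omega, show (k-j)-(m-j) = k-m by omega,
      choose_cast_eq k m j hm' hjm',
      show k-j = (k-m)+(m-j) by omega, PP_add (k-m) (m-j) w]
    ring
  rw [Finset.sum_congr rfl inner, ← Finset.mul_sum, ← PP_vandermonde]

lemma coreR (k : ℕ) (x y z w : ℂ) :
    ∑ j ∈ range (k+1), (-1)^j * (k.choose j : ℂ) * PP (k-j) (w+x+j) * PP (k-j) (y+z+j)
        * PP j z * PP j x
    = ∑ m ∈ range (k+1), (k.choose m : ℂ) * PP m z * PP (k-m) y * PP m w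
        * PP (k-m) (w+x+(m:ℂ)) := by
  have stepA : ∀ j ∈ range (k+1),
      (-1)^j * (k.choose j : ℂ) * PP (k-j) (w+x+j) * PP (k-j) (y+z+j) * PP j z * PP j x
      = ∑ i ∈ range (k+1-j), (-1)^j * (k.choose j : ℂ) * (((k-j).choose i : ℂ))
          * PP (k-j) (w+x+j) * PP (j+i) z * PP ((k-j)-i) y * PP j x := by
    intro j hj
    rw [mem_range] at hj
    have hj' : j ≤ k := Nat.lt_succ_iff.mp hj
    rw [show y+z+(j:ℂ) = (z+(j:ℂ)) + y by ring, PP_vandermonde (k-j) (z+(j:ℂ)) y]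
    rw [show k+1-j = (k-j)+1 by omega]
    simp only [Finset.mul_sum, Finset.sum_mul]
    refine Finset.sum_congr rfl ?_
    intro i _
    rw [PP_add j i z]
    ring
  rw [Finset.sum_congr rfl stepA,
    tri_swap k (fun j i => (-1)^j * (k.choose j : ℂ) * (((k-j).choose i : ℂ))
      * PP (k-j) (w+x+j) * PP (j+i) z * PP ((k-j)-i) y * PP j x)]
  refine Finset.sum_congr rfl ?_
  intro m hm
  rw [mem_range] at hm
  have hm' : m ≤ k := Nat.lt_succ_iff.mp hm
  have inner : ∀ j ∈ range (m+1),
      (-1)^j * (k.choose j : ℂ) * (((k-j).choose (m-j) : ℂ))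
        * PP (k-j) (w+x+j) * PP (j+(m-j)) z * PP ((k-j)-(m-j)) y * PP j x
      = (k.choose m : ℂ) * PP m z * PP (k-m) y * PP (k-m) (w+x+(m:ℂ))
        * ((-1)^j * (m.choose j : ℂ) * PP j x * PP (m-j) ((w+x)+(j:ℂ))) := by
    intro j hjm
    rw [mem_range] at hjm
    have hjm' : j ≤ m := Nat.lt_succ_iff.mp hjm
    have hcast : (w+x+(j:ℂ)) + ((m-j : ℕ):ℂ) = w+x+(m:ℂ) := by
      push_cast [Nat.cast_sub hjm']; ring
    have hch : ((-1:ℂ))^j * (k.choose j : ℂ) * (((k-j).choose (m-j) : ℂ))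
        = (-1)^j * ((k.choose m : ℂ) * (m.choose j : ℂ)) := by
      rw [mul_assoc, choose_cast_eq k m j hm' hjm']
    rw [show j+(m-j) = m by omega, show (k-j)-(m-j) = k-m by omega, hch,
      show k-j = (m-j)+(k-m) by omega, PP_add (m-j) (k-m) (w+x+(j:ℂ)), hcast]
    ring
  rw [Finset.sum_congr rfl inner, ← Finset.mul_sum, PP_vandermonde' m (w+x) x,
    show w+x-x = w by ring]
  ring

lemma core (k : ℕ) (x y z w : ℂ) :
    ∑ j ∈ range (k+1), (k.choose j : ℂ) * PP (k-j) (y+z+j) * PP (k-j) w * PP j x * PP j y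
    = ∑ j ∈ range (k+1), (-1)^j * (k.choose j : ℂ) * PP (k-j) (w+x+j) * PP (k-j) (y+z+j)
        * PP j z * PP j x := by
  rw [coreL, coreR]
  rw [← Finset.sum_range_reflect (fun m => (k.choose m : ℂ) * PP m z * PP (k-m) y * PP m w
    * PP (k-m) (w+x+(m:ℂ))) (k+1)]
  refine Finset.sum_congr rfl ?_
  intro m hm
  rw [mem_range] at hm
  have hm' : m ≤ k := Nat.lt_succ_iff.mp hm
  rw [show k+1-1-m = k-m by omega, show k-(k-m) = m by omega, Nat.choose_symm hm',
    show x+(w+((k-m:ℕ):ℂ)) = w+x+((k-m:ℕ):ℂ) by ring]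
  ring

lemma PP_split1 (k j : ℕ) (hj : j ≤ k) (u : ℂ) :
    PP k u = PP j u * PP (k-j) (u + j) := by
  rw [← PP_add j (k-j) u, Nat.add_sub_cancel' hj]

lemma PP_split2 (k j : ℕ) (hj : j ≤ k) (u : ℂ) :
    PP k u = PP (k-j) u * ((-1)^j * PP j (1 - u - k)) := by
  have h0 := PP_add (k-j) j u
  rw [Nat.sub_add_cancel hj] at h0
  rw [h0]
  congr 1
  have h := PP_neg j (-(u + ((k-j:ℕ):ℂ)))
  rw [neg_neg] at h
  rw [h]
  congr 1
  rw [Nat.cast_sub hj]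
  ring

lemma termL (k j : ℕ) (hj : j ≤ k) (u w xx yy : ℂ)
    (hd1 : PP j u ≠ 0) (hd2 : PP j (1 - w - k) ≠ 0) :
    PP k u * PP k w / (k.factorial : ℂ)
        * (PP j xx * PP j yy * PP j (-(k:ℂ)) / (PP j u * PP j (1 - w - k) * (j.factorial : ℂ)))
    = (k.choose j : ℂ) * PP (k-j) (u + j) * PP (k-j) w * PP j xx * PP j yy
        / (k.factorial : ℂ) := by
  have hkf : ((k.factorial : ℂ)) ≠ 0 := by exact_mod_cast k.factorial_ne_zero
  have hjf : ((j.factorial : ℂ)) ≠ 0 := by exact_mod_cast j.factorial_ne_zero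
  have hkjf : (((k-j).factorial : ℂ)) ≠ 0 := by exact_mod_cast (k-j).factorial_ne_zero
  have hC : ((k.choose j : ℕ) : ℂ) ≠ 0 := by
    exact_mod_cast Nat.choose_pos hj |>.ne'
  have hfact : ((k.factorial : ℂ)) = (k.choose j : ℂ) * (j.factorial : ℂ)
      * (((k-j).factorial : ℂ)) := by
    exact_mod_cast (Nat.choose_mul_factorial_mul_factorial hj).symm
  have hsq : ((-1:ℂ))^j * (-1)^j = 1 := by
    rw [← pow_add, ← two_mul, pow_mul]; norm_num
  rw [PP_split1 k j hj u, PP_split2 k j hj w, PP_negk k j hj]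
  calc (PP j u * PP (k-j) (u+(j:ℂ))) * (PP (k-j) w * ((-1)^j * PP j (1 - w - k)))
        / (k.factorial : ℂ)
        * (PP j xx * PP j yy * ((-1)^j * (k.factorial : ℂ) / ((k-j).factorial : ℂ))
          / (PP j u * PP j (1 - w - k) * (j.factorial : ℂ)))
      = (PP j u / PP j u) * (PP j (1 - w - k) / PP j (1 - w - k))
        * ((k.factorial : ℂ) / (k.factorial : ℂ)) * ((-1:ℂ)^j * (-1)^j)
        * (PP (k-j) (u+(j:ℂ)) * PP (k-j) w * PP j xx * PP j yy
            / (((k-j).factorial : ℂ) * (j.factorial : ℂ))) := by ring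
    _ = PP (k-j) (u+(j:ℂ)) * PP (k-j) w * PP j xx * PP j yy
          / (((k-j).factorial : ℂ) * (j.factorial : ℂ)) := by
        rw [div_self hd1, div_self hd2, div_self hkf, hsq]; ring
    _ = (k.choose j : ℂ) * PP (k-j) (u + j) * PP (k-j) w * PP j xx * PP j yy
          / (k.factorial : ℂ) := by
        rw [hfact]
        field_simp

lemma termR (k j : ℕ) (hj : j ≤ k) (u v zz xx : ℂ)
    (hd1 : PP j u ≠ 0) (hd2 : PP j v ≠ 0) :
    PP k u * PP k v / (k.factorial : ℂ)
        * (PP j zz * PP j xx * PP j (-(k:ℂ)) / (PP j u * PP j v * (j.factorial : ℂ)))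
    = (-1)^j * (k.choose j : ℂ) * PP (k-j) (u + j) * PP (k-j) (v + j) * PP j zz * PP j xx
        / (k.factorial : ℂ) := by
  have hkf : ((k.factorial : ℂ)) ≠ 0 := by exact_mod_cast k.factorial_ne_zero
  have hjf : ((j.factorial : ℂ)) ≠ 0 := by exact_mod_cast j.factorial_ne_zero
  have hkjf : (((k-j).factorial : ℂ)) ≠ 0 := by exact_mod_cast (k-j).factorial_ne_zero
  have hC : ((k.choose j : ℕ) : ℂ) ≠ 0 := by
    exact_mod_cast Nat.choose_pos hj |>.ne'
  have hfact : ((k.factorial : ℂ)) = (k.choose j : ℂ) * (j.factorial : ℂ)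
      * (((k-j).factorial : ℂ)) := by
    exact_mod_cast (Nat.choose_mul_factorial_mul_factorial hj).symm
  rw [PP_split1 k j hj u, PP_split1 k j hj v, PP_negk k j hj]
  calc (PP j u * PP (k-j) (u+(j:ℂ))) * (PP j v * PP (k-j) (v+(j:ℂ)))
        / (k.factorial : ℂ)
        * (PP j zz * PP j xx * ((-1)^j * (k.factorial : ℂ) / ((k-j).factorial : ℂ))
          / (PP j u * PP j v * (j.factorial : ℂ)))
      = (PP j u / PP j u) * (PP j v / PP j v)
        * ((k.factorial : ℂ) / (k.factorial : ℂ))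
        * ((-1:ℂ)^j * (PP (k-j) (u+(j:ℂ)) * PP (k-j) (v+(j:ℂ)) * PP j zz * PP j xx
            / (((k-j).factorial : ℂ) * (j.factorial : ℂ)))) := by ring
    _ = (-1:ℂ)^j * (PP (k-j) (u+(j:ℂ)) * PP (k-j) (v+(j:ℂ)) * PP j zz * PP j xx
          / (((k-j).factorial : ℂ) * (j.factorial : ℂ))) := by
        rw [div_self hd1, div_self hd2, div_self hkf]; ring
    _ = (-1)^j * (k.choose j : ℂ) * PP (k-j) (u + j) * PP (k-j) (v + j) * PP j zz * PP j xx
          / (k.factorial : ℂ) := by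
        rw [hfact]
        field_simp

theorem A3_two_3F2_representations (k : ℕ) (a3 a4 b1 b2 b3 : ℂ)
    (h1 : ∀ j ≤ k, (ascPochhammer ℂ j).eval (b3 + b2 - a4 - a3) ≠ 0)
    (h2 : ∀ j ≤ k, (ascPochhammer ℂ j).eval (1 + a3 - b1 - k) ≠ 0)
    (h3 : ∀ j ≤ k, (ascPochhammer ℂ j).eval (b1 + b3 - a3 - a4) ≠ 0)
    (h4 : ∀ j ≤ k, (ascPochhammer ℂ j).eval (b2 + b3 - a3 - a4) ≠ 0) :
    (ascPochhammer ℂ k).eval (b3 + b2 - a4 - a3) * (ascPochhammer ℂ k).eval (b1 - a3) /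
          (k.factorial : ℂ) *
        ∑ j ∈ range (k + 1),
          (ascPochhammer ℂ j).eval (b3 - a4) * (ascPochhammer ℂ j).eval (b2 - a4) *
              (ascPochhammer ℂ j).eval (-(k : ℂ)) /
            ((ascPochhammer ℂ j).eval (b3 + b2 - a4 - a3) *
              (ascPochhammer ℂ j).eval (1 + a3 - b1 - k) * (j.factorial : ℂ)) =
      (ascPochhammer ℂ k).eval (b1 + b3 - a3 - a4) *
          (ascPochhammer ℂ k).eval (b2 + b3 - a3 - a4) / (k.factorial : ℂ) *
        ∑ j ∈ range (k + 1),
          (ascPochhammer ℂ j).eval (b3 - a3) * (ascPochhammer ℂ j).eval (b3 - a4) *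
              (ascPochhammer ℂ j).eval (-(k : ℂ)) /
            ((ascPochhammer ℂ j).eval (b1 + b3 - a3 - a4) *
              (ascPochhammer ℂ j).eval (b2 + b3 - a3 - a4) * (j.factorial : ℂ)) := by
  simp only [PP_def] at h1 h2 h3 h4 ⊢
  rw [show b3 + b2 - a4 - a3 = b2 - a4 + (b3 - a3) by ring] at h1 ⊢
  rw [show 1 + a3 - b1 - (k:ℂ) = 1 - (b1 - a3) - (k:ℂ) by ring] at h2 ⊢
  rw [show b1 + b3 - a3 - a4 = b1 - a3 + (b3 - a4) by ring] at h3 ⊢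
  rw [show b2 + b3 - a3 - a4 = b2 - a4 + (b3 - a3) by ring] at h4 ⊢
  rw [Finset.mul_sum, Finset.mul_sum]
  have hL : ∀ j ∈ range (k+1),
      PP k (b2 - a4 + (b3 - a3)) * PP k (b1 - a3) / (k.factorial : ℂ)
        * (PP j (b3 - a4) * PP j (b2 - a4) * PP j (-(k:ℂ))
          / (PP j (b2 - a4 + (b3 - a3)) * PP j (1 - (b1 - a3) - (k:ℂ)) * (j.factorial : ℂ)))
      = (k.choose j : ℂ) * PP (k-j) (b2 - a4 + (b3 - a3) + j) * PP (k-j) (b1 - a3)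
          * PP j (b3 - a4) * PP j (b2 - a4) / (k.factorial : ℂ) := by
    intro j hj
    have hjk : j ≤ k := Nat.lt_succ_iff.mp (mem_range.mp hj)
    exact termL k j hjk _ _ _ _ (h1 j hjk) (h2 j hjk)
  have hR : ∀ j ∈ range (k+1),
      PP k (b1 - a3 + (b3 - a4)) * PP k (b2 - a4 + (b3 - a3)) / (k.factorial : ℂ)
        * (PP j (b3 - a3) * PP j (b3 - a4) * PP j (-(k:ℂ))
          / (PP j (b1 - a3 + (b3 - a4)) * PP j (b2 - a4 + (b3 - a3)) * (j.factorial : ℂ)))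
      = (-1)^j * (k.choose j : ℂ) * PP (k-j) (b1 - a3 + (b3 - a4) + j)
          * PP (k-j) (b2 - a4 + (b3 - a3) + j) * PP j (b3 - a3) * PP j (b3 - a4)
          / (k.factorial : ℂ) := by
    intro j hj
    have hjk : j ≤ k := Nat.lt_succ_iff.mp (mem_range.mp hj)
    exact termR k j hjk _ _ _ _ (h3 j hjk) (h4 j hjk)
  rw [Finset.sum_congr rfl hL, Finset.sum_congr rfl hR, ← Finset.sum_div, ← Finset.sum_div,
    core k (b3 - a4) (b2 - a4) (b3 - a3) (b1 - a3)]
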